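/- The space C_k(M,2) of continuous {0,1}-valued functions on the countable metric fan M, with the compact-open topology, contains a closed subspace homeomorphic to the Arens space S₂. -/

import Mathlib

open Filter Topology

/-- The countable metric fan `M = (ω × ω) ∪ {∞}`; `none` plays the role of `∞`. -/
def Fan : Type := Option (ℕ × ℕ)

/-- The basic neighborhood `U(n) = {∞} ∪ ((ω \ n) × ω)` of `∞`. -/
def fanU (n : ℕ) : Set Fan := {x | x = none ∨ ∃ p : ℕ × ℕ, x = some p ∧ n ≤ p.1}

/-- The fan topology: points of `ω × ω` are isolated and the sets `U(n)` are
basic neighborhoods of `∞`. -/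
instance : TopologicalSpace Fan :=
  TopologicalSpace.generateFrom
    ({V | ∃ p : ℕ × ℕ, V = {some p}} ∪ {V | ∃ n : ℕ, V = fanU n})

/-- The set `U(n,k) = ({0} × n) ∪ ((n \ {0}) × k) ∪ U(n)`. -/
def fanUnk (n k : ℕ) : Set Fan :=
  {x | ∃ j : ℕ, j < n ∧ x = some (0, j)} ∪
  {x | ∃ i j : ℕ, 0 < i ∧ i < n ∧ j < k ∧ x = some (i, j)} ∪
  fanU n
/-- The convergent sequence `C₀ = {(0,0)} ∪ {(1/n, 0) : n ≥ 1}`. -/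
def arensC0 : Set (ℝ × ℝ) :=
  {(0, 0)} ∪ {p | ∃ n : ℕ, 0 < n ∧ p = (1 / (n : ℝ), 0)}

/-- The convergent sequence `Cₙ = {(1/n, 0)} ∪ {(1/n, 1/(nm)) : m ≥ 1}`. -/
def arensC (n : ℕ) : Set (ℝ × ℝ) :=
  {(1 / (n : ℝ), 0)} ∪ {p | ∃ m : ℕ, 0 < m ∧ p = (1 / (n : ℝ), 1 / ((n : ℝ) * (m : ℝ)))}

/-- The underlying set of the Arens space `S₂`. -/
def arensCarrier : Set (ℝ × ℝ) :=
  arensC0 ∪ ⋃ n ∈ {n : ℕ | 0 < n}, arensC n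

/-- The Arens space `S₂` as a type. -/
def ArensS2 : Type := ↥arensCarrier

/-- The convergent sequences indexing the inductive topology of `S₂`. -/
def arensSeq : Option {n : ℕ // 0 < n} → Set (ℝ × ℝ)
  | none => arensC0
  | some n => arensC n.val

/-- The Arens topology: the strongest (final/inductive) topology inducing the planar
topology on each of the convergent sequences `C₀, C₁, C₂, …`. -/
instance : TopologicalSpace ArensS2 :=
  ⨆ i : Option {n : ℕ // 0 < n},
    TopologicalSpace.coinduced
      (fun x : {x : ArensS2 // Subtype.val x ∈ arensSeq i} => x.val)
      (TopologicalSpace.induced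
        (fun x : {x : ArensS2 // Subtype.val x ∈ arensSeq i} => Subtype.val (Subtype.val x))
        inferInstance)

attribute [reducible] Fan

attribute [instance] instTopologicalSpaceFan

lemma none_mem_fanU (n : ℕ) : (none : Fan) ∈ fanU n := Or.inl rfl

lemma some_mem_fanU {n : ℕ} {p : ℕ × ℕ} : (some p : Fan) ∈ fanU n ↔ n ≤ p.1 := by
  constructor
  · rintro (h | ⟨q, hq, h⟩)
    · cases h
    · cases hq; exact h
  · exact fun h => Or.inr ⟨p, rfl, h⟩

lemma fanU_mono {m n : ℕ} (h : m ≤ n) : fanU n ⊆ fanU m := by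
  rintro x (hx | ⟨p, rfl, hp⟩)
  · exact Or.inl hx
  · exact Or.inr ⟨p, rfl, h.trans hp⟩

lemma isOpen_pt (p : ℕ × ℕ) : IsOpen ({some p} : Set Fan) :=
  TopologicalSpace.isOpen_generateFrom_of_mem (Or.inl ⟨p, rfl⟩)

lemma isOpen_fanU (n : ℕ) : IsOpen (fanU n) :=
  TopologicalSpace.isOpen_generateFrom_of_mem (Or.inr ⟨n, rfl⟩)

lemma isOpen_no_none {V : Set Fan} (h : (none : Fan) ∉ V) : IsOpen V := by
  have hV : V = ⋃ p ∈ {p : ℕ × ℕ | some p ∈ V}, ({some p} : Set Fan) := by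
    ext x
    cases x with
    | none =>
      simp only [Set.mem_iUnion, Set.mem_singleton_iff]
      exact ⟨fun hx => absurd hx h, by rintro ⟨p, _, ⟨⟩⟩⟩
    | some p =>
      simp only [Set.mem_iUnion, Set.mem_singleton_iff, Set.mem_setOf_eq]
      exact ⟨fun hx => ⟨p, hx, rfl⟩, by rintro ⟨q, hq, h'⟩; cases h'; exact hq⟩
  rw [hV]
  exact isOpen_biUnion fun p _ => isOpen_pt p

lemma mem_nhds_none {V : Set Fan} (hV : IsOpen V) (h : (none : Fan) ∈ V) :
    ∃ n, fanU n ⊆ V := by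
  have hV' : TopologicalSpace.GenerateOpen
      ({V | ∃ p : ℕ × ℕ, V = {some p}} ∪ {V | ∃ n : ℕ, V = fanU n}) V := hV
  clear hV
  revert h
  induction hV' with
  | basic s hs =>
    intro h
    rcases hs with ⟨p, rfl⟩ | ⟨n, rfl⟩
    · cases h
    · exact ⟨n, le_refl _⟩
  | univ => exact fun _ => ⟨0, fun x _ => trivial⟩
  | inter s t _ _ ihs iht =>
    intro ⟨hs, ht⟩
    obtain ⟨a, ha⟩ := ihs hs
    obtain ⟨b, hb⟩ := iht ht
    exact ⟨max a b, fun x hx => ⟨ha (fanU_mono (le_max_left a b) hx),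
      hb (fanU_mono (le_max_right a b) hx)⟩⟩
  | sUnion S hS ih =>
    intro h
    obtain ⟨s, hsS, hns⟩ := h
    obtain ⟨n, hn⟩ := ih s hsS hns
    exact ⟨n, fun x hx => ⟨s, hsS, hn hx⟩⟩

lemma continuous_fanBool {f : Fan → Bool} (N : ℕ)
    (h : ∀ p : ℕ × ℕ, N ≤ p.1 → f (some p) = f none) : Continuous f := by
  rw [continuous_def]
  intro s _
  by_cases hn : (none : Fan) ∈ f ⁻¹' s
  · have he : f ⁻¹' s = fanU N ∪ {x ∈ f ⁻¹' s | x ≠ none} := by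
      ext x
      cases x with
      | none => simpa [fanU] using hn
      | some p =>
        simp only [Set.mem_preimage, Set.mem_union, Set.mem_setOf_eq, some_mem_fanU]
        constructor
        · intro hx
          by_cases hp : N ≤ p.1
          · exact Or.inl hp
          · exact Or.inr ⟨hx, by simp⟩
        · rintro (hp | ⟨hx, _⟩)
          · rw [h p hp]; exact hn
          · exact hx
    rw [he]
    exact (isOpen_fanU N).union (isOpen_no_none fun hx => hx.2 rfl)
  · exact isOpen_no_none hn

lemma finite_no_none {C : Set Fan} (hC : IsCompact C) (h : (none : Fan) ∉ C) :
    C.Finite := by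
  have hcov : C ⊆ ⋃ p : ℕ × ℕ, ({some p} : Set Fan) := by
    intro x hx
    cases x with
    | none => exact absurd hx h
    | some p => exact Set.mem_iUnion.mpr ⟨p, rfl⟩
  obtain ⟨t, ht⟩ := hC.elim_finite_subcover (fun p : ℕ × ℕ => ({some p} : Set Fan))
    (fun p => isOpen_pt p) hcov
  exact Set.Finite.subset (t.finite_toSet.biUnion fun p _ => Set.finite_singleton _) ht

lemma compact_columns {K : Set Fan} (hK : IsCompact K) (n : ℕ) :
    {p : ℕ × ℕ | some p ∈ K ∧ p.1 < n}.Finite := by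
  have h1 : IsCompact (K ∩ (fanU n)ᶜ) := hK.inter_right (isOpen_fanU n).isClosed_compl
  have h2 : (K ∩ (fanU n)ᶜ).Finite :=
    finite_no_none h1 (fun hx => hx.2 (none_mem_fanU n))
  have h3 : {p : ℕ × ℕ | some p ∈ K ∧ p.1 < n} = some ⁻¹' (K ∩ (fanU n)ᶜ) := by
    ext p
    simp only [Set.mem_setOf_eq, Set.mem_preimage, Set.mem_inter_iff, Set.mem_compl_iff,
      some_mem_fanU]
    refine ⟨fun ⟨h1, h2⟩ => ⟨h1, fun hc => absurd hc (by omega)⟩,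
      fun ⟨h1, h2⟩ => ⟨h1, ?_⟩⟩
    by_contra hc
    exact h2 (le_of_not_gt hc)
  rw [h3]
  exact Set.Finite.preimage (Set.injOn_of_injective (Option.some_injective _)) h2

/-- A bound for the second coordinates of points of a compact set in the first `n` columns. -/
lemma compact_bound {K : Set Fan} (hK : IsCompact K) (n : ℕ) :
    ∃ M : ℕ, ∀ p : ℕ × ℕ, some p ∈ K → p.1 < n → p.2 ≤ M := by
  obtain ⟨M, hM⟩ := ((compact_columns hK n).image Prod.snd).bddAbove
  exact ⟨M, fun p hp hp1 => hM ⟨p, ⟨hp, hp1⟩, rfl⟩⟩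

lemma isCompact_fan {A : Set (ℕ × ℕ)} (hA : ∀ n, {p ∈ A | p.1 < n}.Finite) :
    IsCompact {x : Fan | x = none ∨ ∃ p ∈ A, x = some p} := by
  rw [isCompact_iff_finite_subcover]
  intro ι U hU hcov
  classical
  have hn : (none : Fan) ∈ ⋃ i, U i := hcov (Or.inl rfl)
  obtain ⟨i₀, hi₀⟩ := Set.mem_iUnion.mp hn
  obtain ⟨n, hfan⟩ := mem_nhds_none (hU i₀) hi₀
  have hch : ∀ p : ℕ × ℕ, ∃ i, p ∈ A → some p ∈ U i := by
    intro p
    by_cases hp : p ∈ A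
    · obtain ⟨i, hi⟩ := Set.mem_iUnion.mp (hcov (Or.inr ⟨p, hp, rfl⟩))
      exact ⟨i, fun _ => hi⟩
    · exact ⟨i₀, fun h => absurd h hp⟩
  choose c hc using hch
  refine ⟨insert i₀ ((hA n).toFinset.image c), fun x hx => ?_⟩
  rcases hx with rfl | ⟨p, hpA, rfl⟩
  · exact Set.mem_biUnion (Finset.mem_insert_self _ _) (hfan (none_mem_fanU n))
  · by_cases hp1 : n ≤ p.1
    · exact Set.mem_biUnion (Finset.mem_insert_self _ _) (hfan (some_mem_fanU.mpr hp1))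
    · refine Set.mem_biUnion (Finset.mem_insert_of_mem ?_) (hc p hpA)
      exact Finset.mem_image.mpr ⟨p, (hA n).mem_toFinset.mpr ⟨hpA, by omega⟩, rfl⟩

/-! ### The embedded functions -/

def cTop : C(Fan, Bool) := ⟨fun _ => true, continuous_const⟩

def cS (n : ℕ) : C(Fan, Bool) :=
  ⟨fun x => match x with
    | none => true
    | some p => decide (0 < p.1 ∨ p.2 < n + 1),
   continuous_fanBool 1 (by intro p hp; simp; omega)⟩

def cU (n m : ℕ) : C(Fan, Bool) :=
  ⟨fun x => match x with
    | none => true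
    | some p => decide (n + 1 ≤ p.1 ∨ (p.1 = 0 ∧ p.2 < n + 1) ∨ (0 < p.1 ∧ p.2 < m)),
   continuous_fanBool (n + 1) (by intro p hp; simp; omega)⟩

@[simp] lemma cTop_apply (x : Fan) : cTop x = true := rfl
@[simp] lemma cS_none (n : ℕ) : cS n none = true := rfl
@[simp] lemma cS_some (n : ℕ) (p : ℕ × ℕ) :
    cS n (some p) = decide (0 < p.1 ∨ p.2 < n + 1) := rfl
@[simp] lemma cU_none (n m : ℕ) : cU n m none = true := rfl
@[simp] lemma cU_some (n m : ℕ) (p : ℕ × ℕ) :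
    cU n m (some p) = decide (n + 1 ≤ p.1 ∨ (p.1 = 0 ∧ p.2 < n + 1) ∨ (0 < p.1 ∧ p.2 < m)) := rfl

lemma cTop_ne_cS (n : ℕ) : cTop ≠ cS n := fun h => by
  have := ContinuousMap.congr_fun h (some (0, n + 1))
  simp at this

lemma cTop_ne_cU (n m : ℕ) : cTop ≠ cU n m := fun h => by
  have := ContinuousMap.congr_fun h (some (0, n + 1))
  simp at this

lemma cS_ne_cU (n k m : ℕ) (hk : 0 < k) : cS n ≠ cU k m := fun h => by
  have := ContinuousMap.congr_fun h (some (1, m))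
  simp at this
  omega

lemma cS_inj {n k : ℕ} (h : cS n = cS k) : n = k := by
  have h1 := ContinuousMap.congr_fun h (some (0, n))
  have h2 := ContinuousMap.congr_fun h (some (0, k))
  simp at h1 h2
  omega

lemma cU_inj {n k m l : ℕ} (hn : 0 < n) (hk : 0 < k) (h : cU n m = cU k l) :
    n = k ∧ m = l := by
  have h1 := ContinuousMap.congr_fun h (some (0, n))
  have h2 := ContinuousMap.congr_fun h (some (0, k))
  have h3 := ContinuousMap.congr_fun h (some (1, m))
  have h4 := ContinuousMap.congr_fun h (some (1, l))
  simp [hn.ne', hk.ne'] at h1 h2 h3 h4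
  omega

/-! ### The embedding -/

noncomputable def enc (q : ℝ × ℝ) : C(Fan, Bool) :=
  if q.1 = 0 then cTop
  else if q.2 = 0 then cS ⌊1 / q.1⌋₊ else cU ⌊1 / q.1⌋₊ ⌊q.1 / q.2⌋₊

noncomputable def eArens : ArensS2 → C(Fan, Bool) := fun x => enc x.val

lemma enc_zero : enc ((0 : ℝ), (0 : ℝ)) = cTop := by simp [enc]

lemma enc_S {n : ℕ} (hn : 0 < n) : enc (1 / (n : ℝ), 0) = cS n := by
  have hn' : (0 : ℝ) < n := by exact_mod_cast hn
  have h1 : (1 / (n : ℝ)) ≠ 0 := by positivity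
  rw [enc]
  rw [if_neg h1, if_pos rfl, one_div_one_div, Nat.floor_natCast]

lemma enc_U {n m : ℕ} (hn : 0 < n) (hm : 0 < m) :
    enc (1 / (n : ℝ), 1 / ((n : ℝ) * (m : ℝ))) = cU n m := by
  have hn' : (0 : ℝ) < n := by exact_mod_cast hn
  have hm' : (0 : ℝ) < m := by exact_mod_cast hm
  have h1 : (1 / (n : ℝ)) ≠ 0 := by positivity
  have h2 : (1 / ((n : ℝ) * m)) ≠ 0 := by positivity
  have h3 : (1 / (n : ℝ)) / (1 / ((n : ℝ) * m)) = (m : ℝ) := by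
    field_simp
  rw [enc]
  rw [if_neg h1, if_neg h2, one_div_one_div, h3, Nat.floor_natCast, Nat.floor_natCast]

/-! ### Points of the Arens space -/

lemma mem_carrier_zero : ((0 : ℝ), (0 : ℝ)) ∈ arensCarrier := Or.inl (Or.inl rfl)

lemma mem_carrier_S {n : ℕ} (hn : 0 < n) : ((1 / (n : ℝ)), (0 : ℝ)) ∈ arensCarrier :=
  Or.inl (Or.inr ⟨n, hn, rfl⟩)

lemma mem_carrier_U {n m : ℕ} (hn : 0 < n) (hm : 0 < m) :
    ((1 / (n : ℝ)), 1 / ((n : ℝ) * (m : ℝ))) ∈ arensCarrier := by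
  refine Or.inr ?_
  simp only [Set.mem_iUnion, Set.mem_setOf_eq]
  exact ⟨n, hn, Or.inr ⟨m, hm, rfl⟩⟩

noncomputable def pt0 : ArensS2 := ⟨((0 : ℝ), (0 : ℝ)), mem_carrier_zero⟩
noncomputable def ptS (n : ℕ) (hn : 0 < n) : ArensS2 := ⟨_, mem_carrier_S hn⟩
noncomputable def ptU (n m : ℕ) (hn : 0 < n) (hm : 0 < m) : ArensS2 := ⟨_, mem_carrier_U hn hm⟩

lemma carrier_cases (x : ArensS2) :
    x.val = ((0 : ℝ), (0 : ℝ)) ∨ (∃ n : ℕ, 0 < n ∧ x.val = (1 / (n : ℝ), 0)) ∨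
      (∃ n m : ℕ, 0 < n ∧ 0 < m ∧ x.val = (1 / (n : ℝ), 1 / ((n : ℝ) * (m : ℝ)))) := by
  obtain h := x.property
  rcases h with (h | ⟨n, hn, h⟩) | h
  · exact Or.inl h
  · exact Or.inr (Or.inl ⟨n, hn, h⟩)
  · simp only [Set.mem_iUnion, Set.mem_setOf_eq] at h
    obtain ⟨n, hn, h⟩ := h
    rcases h with h | ⟨m, hm, h⟩
    · exact Or.inr (Or.inl ⟨n, hn, h⟩)
    · exact Or.inr (Or.inr ⟨n, m, hn, hm, h⟩)

lemma e_zero {x : ArensS2} (hx : x.val = ((0 : ℝ), (0 : ℝ))) : eArens x = cTop := by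
  rw [eArens, hx, enc_zero]

lemma e_S {x : ArensS2} {n : ℕ} (hn : 0 < n) (hx : x.val = (1 / (n : ℝ), 0)) :
    eArens x = cS n := by rw [eArens, hx, enc_S hn]

lemma e_U {x : ArensS2} {n m : ℕ} (hn : 0 < n) (hm : 0 < m)
    (hx : x.val = (1 / (n : ℝ), 1 / ((n : ℝ) * (m : ℝ)))) :
    eArens x = cU n m := by rw [eArens, hx, enc_U hn hm]

lemma injective_e : Function.Injective eArens := by
  intro x y h
  apply Subtype.ext
  rcases carrier_cases x with hx | ⟨n, hn, hx⟩ | ⟨n, m, hn, hm, hx⟩ <;>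
    rcases carrier_cases y with hy | ⟨k, hk, hy⟩ | ⟨k, l, hk, hl, hy⟩
  · rw [hx, hy]
  · exact absurd (h.trans (e_S hk hy)) (e_zero hx ▸ cTop_ne_cS k)
  · exact absurd (h.trans (e_U hk hl hy)) (e_zero hx ▸ cTop_ne_cU k l)
  · exact absurd ((e_zero hy).symm.trans (h.symm.trans (e_S hn hx))) (fun hh => cTop_ne_cS n hh)
  · rw [hx, hy, cS_inj ((e_S hn hx).symm.trans (h.trans (e_S hk hy)))]
  · exact absurd ((e_S hn hx).symm.trans (h.trans (e_U hk hl hy))) (cS_ne_cU n k l hk)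
  · exact absurd ((e_zero hy).symm.trans (h.symm.trans (e_U hn hm hx))) (fun hh => cTop_ne_cU n m hh)
  · exact absurd ((e_S hk hy).symm.trans (h.symm.trans (e_U hn hm hx))) (cS_ne_cU k n m hn)
  · obtain ⟨h1, h2⟩ := cU_inj hn hk ((e_U hn hm hx).symm.trans (h.trans (e_U hk hl hy)))
    rw [hx, hy, h1, h2]

/-! ### Open agreement sets in the compact-open topology -/

lemma isOpen_agree (g : C(Fan, Bool)) {K : Set Fan} (hK : IsCompact K) :
    IsOpen {f : C(Fan, Bool) | ∀ p ∈ K, f p = g p} := by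
  have he : {f : C(Fan, Bool) | ∀ p ∈ K, f p = g p}
      = {f : C(Fan, Bool) | Set.MapsTo f (K ∩ g ⁻¹' {true}) {true}} ∩
        {f : C(Fan, Bool) | Set.MapsTo f (K ∩ g ⁻¹' {false}) {false}} := by
    ext f
    simp only [Set.mem_setOf_eq, Set.mem_inter_iff]
    constructor
    · refine fun hf => ⟨fun p hp => ?_, fun p hp => ?_⟩
      · rw [Set.mem_singleton_iff, hf p hp.1]; exact hp.2
      · rw [Set.mem_singleton_iff, hf p hp.1]; exact hp.2
    · rintro ⟨h1, h2⟩ p hp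
      cases hb : g p with
      | true => exact h1 ⟨hp, hb⟩
      | false => exact h2 ⟨hp, hb⟩
  rw [he]
  exact (ContinuousMap.isOpen_setOf_mapsTo
      (hK.inter_right ((isClosed_discrete _).preimage g.continuous)) (isOpen_discrete _)).inter
    (ContinuousMap.isOpen_setOf_mapsTo
      (hK.inter_right ((isClosed_discrete _).preimage g.continuous)) (isOpen_discrete _))

/-- A criterion for a map into `C_k(Fan, Bool)` to be continuous. -/
lemma continuous_into_CO {α : Type*} [TopologicalSpace α] {G : α → ℝ × ℝ}
    (hG : Continuous G) (F : α → C(Fan, Bool))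
    (h : ∀ a, ∀ K : Set Fan, IsCompact K → ∃ V : Set (ℝ × ℝ), IsOpen V ∧ G a ∈ V ∧
      ∀ b, G b ∈ V → ∀ p ∈ K, F b p = F a p) : Continuous F := by
  rw [ContinuousMap.continuous_compactOpen]
  intro K hK U hU
  rw [isOpen_iff_forall_mem_open]
  intro a ha
  obtain ⟨V, hVo, haV, hagree⟩ := h a K hK
  refine ⟨G ⁻¹' V, fun b hb p hp => ?_, hVo.preimage hG, haV⟩
  rw [hagree b hb p hp]
  exact ha hp

/-! ### Real-number helper lemmas -/

lemma npos {n : ℕ} (hn : 0 < n) : (0 : ℝ) < n := by exact_mod_cast hn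

lemma recip_lt_nat {a b : ℕ} (hb : 0 < b) (h : 1 / (b : ℝ) < 1 / (a : ℝ)) : a < b := by
  have := lt_of_one_div_lt_one_div (npos hb) h
  exact_mod_cast this

/-- From `1/(n*m') < 1/(n*(M+1))` conclude `M < m'`. -/
lemma recip_lt_mul {n m' M : ℕ} (hn : 0 < n) (hm' : 0 < m')
    (h : 1 / ((n : ℝ) * m') < 1 / ((n : ℝ) * ((M : ℝ) + 1))) : M < m' := by
  have h0 : (0 : ℝ) < (n : ℝ) * m' := by positivity
  have h1 := lt_of_one_div_lt_one_div h0 h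
  have h2 : (M : ℝ) + 1 < m' := (mul_lt_mul_iff_right₀ (npos hn)).mp h1
  have h3 : (M : ℝ) < m' := by linarith
  exact_mod_cast h3

/-! ### Continuity of the embedding -/

lemma agree_S_top {K : Set Fan} {M : ℕ} (hM : ∀ p : ℕ × ℕ, some p ∈ K → p.1 < 1 → p.2 ≤ M)
    {k : ℕ} (hMk : M < k) : ∀ p ∈ K, cS k p = cTop p := by
  intro p hp
  cases p with
  | none => rfl
  | some p =>
    have := hM p hp
    simp only [cS_some, cTop_apply, decide_eq_true_eq]
    omega

lemma agree_U_S {K : Set Fan} {n M : ℕ}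
    (hM : ∀ p : ℕ × ℕ, some p ∈ K → p.1 < n + 1 → p.2 ≤ M)
    {m : ℕ} (hMm : M < m) : ∀ p ∈ K, cU n m p = cS n p := by
  intro p hp
  cases p with
  | none => rfl
  | some p =>
    have := hM p hp
    simp only [cS_some, cU_some]
    apply decide_eq_decide.mpr
    omega

lemma continuous_e : Continuous eArens := by
  have key : ∀ i : Option {n : ℕ // 0 < n},
      Continuous[TopologicalSpace.coinduced
        (fun x : {x : ArensS2 // Subtype.val x ∈ arensSeq i} => x.val)
        (TopologicalSpace.induced
          (fun x : {x : ArensS2 // Subtype.val x ∈ arensSeq i} => Subtype.val (Subtype.val x))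
          inferInstance), inferInstance] eArens := by
    intro i
    rw [continuous_coinduced_dom]
    letI : TopologicalSpace {x : ArensS2 // Subtype.val x ∈ arensSeq i} :=
      TopologicalSpace.induced
        (fun x : {x : ArensS2 // Subtype.val x ∈ arensSeq i} => Subtype.val (Subtype.val x))
        inferInstance
    apply continuous_into_CO (G := fun x : {x : ArensS2 // Subtype.val x ∈ arensSeq i} =>
      Subtype.val (Subtype.val x)) continuous_induced_dom
    intro a K hK
    match i with
    | none =>
      rcases (a.2 : a.1.1 ∈ arensC0) with h | ⟨k, hk, h⟩
      · -- a is the origin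
        have h' : a.1.1 = ((0 : ℝ), (0 : ℝ)) := h
        obtain ⟨M, hM⟩ := compact_bound hK 1
        refine ⟨{q : ℝ × ℝ | q.1 < 1 / ((M : ℝ) + 1)},
          isOpen_lt continuous_fst continuous_const, ?_, ?_⟩
        · show a.1.1.1 < 1 / ((M : ℝ) + 1)
          rw [h']
          positivity
        · intro b hb p hp
          show eArens b.1 p = eArens a.1 p
          rcases (b.2 : b.1.1 ∈ arensC0) with hb0 | ⟨l, hl, hbl⟩
          · have : b.1 = a.1 := Subtype.ext ((Set.eq_of_mem_singleton hb0).trans h'.symm)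
            rw [this]
          · have hbV : (1 : ℝ) / l < 1 / ((M : ℝ) + 1) := by
              have := hb
              rw [show b.1.1 = (1 / (l : ℝ), 0) from hbl] at this
              exact this
            have hMl : M + 1 < l := by
              have h1 : (M : ℝ) + 1 < l := by
                have h0 : (0 : ℝ) < l := npos hl
                have := lt_of_one_div_lt_one_div h0 hbV
                linarith
              exact_mod_cast (by push_cast; linarith : ((M + 1 : ℕ) : ℝ) < l)
            rw [e_S hl hbl, e_zero h']
            exact agree_S_top hM (by omega) p hp
      · -- a is (1/k, 0), an isolated point of C₀
        have hkR : (0 : ℝ) < k := npos hk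
        refine ⟨{q : ℝ × ℝ | 1 / ((k : ℝ) + 1) < q.1 ∧ q.1 < 1 / ((k : ℝ) - 2⁻¹)},
          (isOpen_lt continuous_const continuous_fst).inter
            (isOpen_lt continuous_fst continuous_const), ?_, ?_⟩
        · show 1 / ((k : ℝ) + 1) < a.1.1.1 ∧ a.1.1.1 < 1 / ((k : ℝ) - 2⁻¹)
          rw [h]
          constructor
          · exact one_div_lt_one_div_of_lt hkR (by linarith)
          · have h1 : (0 : ℝ) < (k : ℝ) - 2⁻¹ := by
              have : (1 : ℝ) ≤ k := by exact_mod_cast hk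
              linarith
            exact one_div_lt_one_div_of_lt h1 (by linarith)
        · intro b hb p hp
          show eArens b.1 p = eArens a.1 p
          obtain ⟨hb1, hb2⟩ := hb
          rcases (b.2 : b.1.1 ∈ arensC0) with hb0 | ⟨l, hl, hbl⟩
          · exfalso
            rw [show b.1.1 = ((0 : ℝ), (0 : ℝ)) from Set.eq_of_mem_singleton hb0] at hb1
            have : (0 : ℝ) < 1 / ((k : ℝ) + 1) := by positivity
            exact absurd hb1 (by simpa using this.asymm)
          · rw [show b.1.1 = (1 / (l : ℝ), 0) from hbl] at hb1 hb2
            have hlR : (0 : ℝ) < l := npos hl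
            have hlk : l < k + 1 := by
              have := lt_of_one_div_lt_one_div (by positivity : (0 : ℝ) < (k : ℝ) + 1) hb1
              exact_mod_cast (by push_cast; linarith : (l : ℝ) < ((k + 1 : ℕ) : ℝ))
            have hkl : k ≤ l := by
              have h2 := lt_of_one_div_lt_one_div hlR hb2
              by_contra hc
              push_neg at hc
              have : (l : ℝ) ≤ (k : ℝ) - 1 := by
                have : (l + 1 : ℕ) ≤ k := hc
                have := (Nat.cast_le (α := ℝ)).mpr this
                push_cast at this
                linarith
              linarith
            have hlk' : l = k := by omega
            have : b.1 = a.1 := Subtype.ext (by rw [hbl, h, hlk'])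
            rw [this]
    | some nn =>
      obtain ⟨n, hn⟩ := nn
      have hnR : (0 : ℝ) < n := npos hn
      rcases (a.2 : a.1.1 ∈ arensC n) with h | ⟨m, hm, h⟩
      · -- a is (1/n, 0), the limit of C_n
        have h' : a.1.1 = (1 / (n : ℝ), 0) := h
        obtain ⟨M, hM⟩ := compact_bound hK (n + 1)
        refine ⟨{q : ℝ × ℝ | q.2 < 1 / ((n : ℝ) * ((M : ℝ) + 1))},
          isOpen_lt continuous_snd continuous_const, ?_, ?_⟩
        · show a.1.1.2 < 1 / ((n : ℝ) * ((M : ℝ) + 1))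
          rw [h']
          positivity
        · intro b hb p hp
          show eArens b.1 p = eArens a.1 p
          rcases (b.2 : b.1.1 ∈ arensC n) with hb0 | ⟨m', hm', hbm⟩
          · have : b.1 = a.1 := Subtype.ext ((Set.eq_of_mem_singleton hb0).trans h'.symm)
            rw [this]
          · have hbV : 1 / ((n : ℝ) * m') < 1 / ((n : ℝ) * ((M : ℝ) + 1)) := by
              have := hb
              rw [show b.1.1 = (1 / (n : ℝ), 1 / ((n : ℝ) * (m' : ℝ))) from hbm] at this
              exact this
            have hMm : M < m' := recip_lt_mul hn hm' hbV
            rw [e_U hn hm' hbm, e_S hn h']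
            exact agree_U_S hM hMm p hp
      · -- a is (1/n, 1/(n*m)), an isolated point of C_n
        have hmR : (0 : ℝ) < m := npos hm
        have hnm1 : (1 : ℝ) ≤ (n : ℝ) * m := by
          have : (1 : ℕ) ≤ n * m := Nat.one_le_iff_ne_zero.mpr (by positivity)
          exact_mod_cast this
        refine ⟨{q : ℝ × ℝ | 1 / ((n : ℝ) * ((m : ℝ) + 1)) < q.2 ∧
            q.2 < 1 / ((n : ℝ) * (m : ℝ) - 2⁻¹)},
          (isOpen_lt continuous_const continuous_snd).inter
            (isOpen_lt continuous_snd continuous_const), ?_, ?_⟩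
        · show 1 / ((n : ℝ) * ((m : ℝ) + 1)) < a.1.1.2 ∧
            a.1.1.2 < 1 / ((n : ℝ) * (m : ℝ) - 2⁻¹)
          rw [h]
          constructor
          · apply one_div_lt_one_div_of_lt (by positivity)
            nlinarith
          · apply one_div_lt_one_div_of_lt (by linarith)
            linarith
        · intro b hb p hp
          show eArens b.1 p = eArens a.1 p
          obtain ⟨hb1, hb2⟩ := hb
          rcases (b.2 : b.1.1 ∈ arensC n) with hb0 | ⟨m', hm', hbm⟩
          · exfalso
            rw [show b.1.1 = (1 / (n : ℝ), 0) from Set.eq_of_mem_singleton hb0] at hb1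
            have : (0 : ℝ) < 1 / ((n : ℝ) * ((m : ℝ) + 1)) := by positivity
            exact absurd hb1 (by simpa using this.asymm)
          · rw [show b.1.1 = (1 / (n : ℝ), 1 / ((n : ℝ) * (m' : ℝ))) from hbm] at hb1 hb2
            have hm'R : (0 : ℝ) < m' := npos hm'
            have hle : m' ≤ m := by
              have h1 := lt_of_one_div_lt_one_div
                (by positivity : (0 : ℝ) < (n : ℝ) * ((m : ℝ) + 1)) hb1
              have h2 : (m' : ℝ) < (m : ℝ) + 1 := (mul_lt_mul_iff_right₀ hnR).mp h1
              have h3 : m' < m + 1 := by exact_mod_cast (by push_cast; linarith : (m' : ℝ) < ((m + 1 : ℕ) : ℝ))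
              omega
            have hge : m ≤ m' := by
              have h2 := lt_of_one_div_lt_one_div (by positivity : (0 : ℝ) < (n : ℝ) * m') hb2
              by_contra hc
              push_neg at hc
              have h3 : (m' : ℝ) ≤ (m : ℝ) - 1 := by
                have : (m' + 1 : ℕ) ≤ m := hc
                have := (Nat.cast_le (α := ℝ)).mpr this
                push_cast at this
                linarith
              have hn1 : (1 : ℝ) ≤ n := by exact_mod_cast hn
              have h4 : (n : ℝ) * m' ≤ (n : ℝ) * m - n := by nlinarith
              linarith
            have hmm : m' = m := le_antisymm hle hge
            have : b.1 = a.1 := Subtype.ext (by rw [hbm, h, hmm])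
            rw [this]
  exact continuous_iSup_dom.mpr key

/-! ### Relatively open slices of open sets -/

lemma open_slice {U : Set ArensS2} (hU : IsOpen U) (i : Option {n : ℕ // 0 < n}) :
    ∃ V : Set (ℝ × ℝ), IsOpen V ∧
      ∀ y : ArensS2, y.val ∈ arensSeq i → (y ∈ U ↔ y.val ∈ V) := by
  have h : IsOpen[⨆ i : Option {n : ℕ // 0 < n},
      TopologicalSpace.coinduced
        (fun x : {x : ArensS2 // Subtype.val x ∈ arensSeq i} => x.val)
        (TopologicalSpace.induced
          (fun x : {x : ArensS2 // Subtype.val x ∈ arensSeq i} => Subtype.val (Subtype.val x))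
          inferInstance)] U := hU
  rw [isOpen_iSup_iff] at h
  have hi := h i
  rw [isOpen_coinduced] at hi
  obtain ⟨V, hVo, hV⟩ := isOpen_induced_iff.mp hi
  refine ⟨V, hVo, fun y hy => ?_⟩
  have := Set.ext_iff.mp hV ⟨y, hy⟩
  simpa using this.symm

lemma tail0 {U : Set ArensS2} (hU : IsOpen U) {x : ArensS2}
    (hx : x.val = ((0 : ℝ), (0 : ℝ))) (hxU : x ∈ U) :
    ∃ N : ℕ, ∀ k : ℕ, N ≤ k → 0 < k → ∀ y : ArensS2, y.val = (1 / (k : ℝ), 0) → y ∈ U := by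
  obtain ⟨V, hVo, hV⟩ := open_slice hU none
  have h0 : x.val ∈ arensSeq none := by rw [hx]; exact Or.inl rfl
  have hxV : x.val ∈ V := (hV x h0).mp hxU
  have ht : Tendsto (fun k : ℕ => ((1 / (k : ℝ)), (0 : ℝ))) atTop (𝓝 ((0 : ℝ), (0 : ℝ))) :=
    tendsto_one_div_atTop_nhds_zero_nat.prodMk_nhds tendsto_const_nhds
  have hev := ht.eventually (hVo.mem_nhds (hx ▸ hxV))
  obtain ⟨N, hN⟩ := eventually_atTop.mp hev
  refine ⟨N, fun k hk hk0 y hy => ?_⟩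
  refine (hV y ?_).mpr ?_
  · rw [hy]; exact Or.inr ⟨k, hk0, rfl⟩
  · rw [hy]; exact hN k hk

lemma tailn {U : Set ArensS2} (hU : IsOpen U) {n : ℕ} (hn : 0 < n) {x : ArensS2}
    (hx : x.val = (1 / (n : ℝ), 0)) (hxU : x ∈ U) :
    ∃ M : ℕ, ∀ m : ℕ, M ≤ m → 0 < m →
      ∀ y : ArensS2, y.val = (1 / (n : ℝ), 1 / ((n : ℝ) * (m : ℝ))) → y ∈ U := by
  obtain ⟨V, hVo, hV⟩ := open_slice hU (some ⟨n, hn⟩)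
  have h0 : x.val ∈ arensSeq (some ⟨n, hn⟩) := by rw [hx]; exact Or.inl rfl
  have hxV : x.val ∈ V := (hV x h0).mp hxU
  have ht : Tendsto (fun m : ℕ => ((1 / (n : ℝ)), 1 / ((n : ℝ) * (m : ℝ)))) atTop
      (𝓝 ((1 / (n : ℝ)), (0 : ℝ))) := by
    refine Tendsto.prodMk_nhds tendsto_const_nhds ?_
    have h1 : Tendsto (fun m : ℕ => (1 / (n : ℝ)) * (1 / (m : ℝ))) atTop (𝓝 ((1 / (n : ℝ)) * 0)) :=
      tendsto_one_div_atTop_nhds_zero_nat.const_mul _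
    rw [mul_zero] at h1
    refine h1.congr fun m => ?_
    rw [div_mul_div_comm, one_mul]
  have hev := ht.eventually (hVo.mem_nhds (hx ▸ hxV))
  obtain ⟨M, hM⟩ := eventually_atTop.mp hev
  refine ⟨M, fun m hm hm0 y hy => ?_⟩
  refine (hV y ?_).mpr ?_
  · rw [hy]; exact Or.inr ⟨m, hm0, rfl⟩
  · rw [hy]; exact hM m hm

/-! ### The inducing property -/

lemma inducing_aux {U : Set ArensS2} (hU : IsOpen U) (x : ArensS2) (hx : x ∈ U) :
    ∃ K : Set Fan, IsCompact K ∧ ∀ y : ArensS2, (∀ p ∈ K, eArens y p = eArens x p) → y ∈ U := by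
  rcases carrier_cases x with h0 | ⟨n, hn, h⟩ | ⟨n, m, hn, hm, h⟩
  · -- x is the origin
    obtain ⟨N, hN⟩ := tail0 hU h0 hx
    have hMn : ∀ k : ℕ, ∃ M : ℕ, ∀ m : ℕ, M ≤ m → 0 < m → 0 < k → N ≤ k →
        ∀ y : ArensS2, y.val = (1 / (k : ℝ), 1 / ((k : ℝ) * (m : ℝ))) → y ∈ U := by
      intro k
      by_cases hc : 0 < k ∧ N ≤ k
      · obtain ⟨M, hM⟩ := tailn hU hc.1 (x := ptS k hc.1) rfl (hN k hc.2 hc.1 (ptS k hc.1) rfl)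
        exact ⟨M, fun m h1 h2 _ _ => hM m h1 h2⟩
      · exact ⟨0, fun m _ _ h1 h2 => absurd ⟨h1, h2⟩ hc⟩
    choose M hM using hMn
    refine ⟨{z : Fan | z = none ∨ ∃ p ∈ {q : ℕ × ℕ | q = (0, N) ∨ ∃ i, 0 < i ∧ q = (i, M i)},
        z = some p}, ?_, ?_⟩
    · apply isCompact_fan
      intro n'
      apply Set.Finite.subset (Set.Finite.union (Set.finite_singleton ((0, N) : ℕ × ℕ))
        ((Set.finite_Icc 1 n').image (fun i => (i, M i))))
      rintro q ⟨(rfl | ⟨i, hi, rfl⟩), hq2⟩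
      · exact Or.inl rfl
      · exact Or.inr ⟨i, by simp at hq2 ⊢; omega, rfl⟩
    · intro y hy
      rw [e_zero h0] at hy
      rcases carrier_cases y with hy0 | ⟨k, hk, hyk⟩ | ⟨k, l, hk, hl, hyk⟩
      · have : y = x := Subtype.ext (hy0.trans h0.symm)
        rw [this]; exact hx
      · have h1 := hy (some (0, N)) (Or.inr ⟨(0, N), Or.inl rfl, rfl⟩)
        rw [e_S hk hyk] at h1
        simp at h1
        exact hN k (by omega) hk y hyk
      · have h1 := hy (some (0, N)) (Or.inr ⟨(0, N), Or.inl rfl, rfl⟩)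
        have h2 := hy (some (k, M k)) (Or.inr ⟨(k, M k), Or.inr ⟨k, hk, rfl⟩, rfl⟩)
        rw [e_U hk hl hyk] at h1 h2
        simp [hk.ne'] at h1 h2
        exact hM k l (by omega) hl hk (by omega) y hyk
  · -- x is (1/n, 0)
    obtain ⟨M, hM⟩ := tailn hU hn h hx
    refine ⟨{some (0, n), some (0, n + 1), some (1, M)}, (Set.toFinite _).isCompact, ?_⟩
    intro y hy
    rw [e_S hn h] at hy
    have h1 := hy (some (0, n)) (by simp)
    have h2 := hy (some (0, n + 1)) (by simp)
    have h3 := hy (some (1, M)) (by simp)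
    rcases carrier_cases y with hy0 | ⟨k, hk, hyk⟩ | ⟨k, l, hk, hl, hyk⟩
    · rw [e_zero hy0] at h2
      simp at h2
    · rw [e_S hk hyk] at h1 h2
      simp at h1 h2
      have : k = n := by omega
      have hyx : y = x := Subtype.ext (by rw [hyk, h, this])
      rw [hyx]; exact hx
    · rw [e_U hk hl hyk] at h1 h2 h3
      simp [hk.ne'] at h1 h2 h3
      have hkn : k = n := by omega
      subst hkn
      exact hM l (by omega) hl y hyk
  · -- x is (1/n, 1/(n*m))
    refine ⟨{some (0, n), some (0, n + 1), some (1, m - 1), some (1, m)},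
      (Set.toFinite _).isCompact, ?_⟩
    intro y hy
    rw [e_U hn hm h] at hy
    have h1 := hy (some (0, n)) (by simp)
    have h2 := hy (some (0, n + 1)) (by simp)
    have h3 := hy (some (1, m - 1)) (by simp)
    have h4 := hy (some (1, m)) (by simp)
    rcases carrier_cases y with hy0 | ⟨k, hk, hyk⟩ | ⟨k, l, hk, hl, hyk⟩
    · rw [e_zero hy0] at h2
      simp [hn.ne'] at h2
    · rw [e_S hk hyk] at h4
      simp [hn.ne'] at h4
    · rw [e_U hk hl hyk] at h1 h2 h3 h4
      simp [hk.ne', hn.ne'] at h1 h2 h3 h4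
      have hkn : k = n := by omega
      have hlm : l = m := by omega
      have hyx : y = x := Subtype.ext (by rw [hyk, h, hkn, hlm])
      rw [hyx]; exact hx

lemma inducing_e : Topology.IsInducing eArens := by
  refine ⟨le_antisymm (continuous_iff_le_induced.mp continuous_e) ?_⟩
  rw [TopologicalSpace.le_def]
  intro U hU
  show IsOpen[TopologicalSpace.induced eArens inferInstance] U
  have hch : ∀ x : U, ∃ K : Set Fan, IsCompact K ∧
      ∀ y : ArensS2, (∀ p ∈ K, eArens y p = eArens x.1 p) → y ∈ U :=
    fun x => inducing_aux hU x.1 x.2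
  choose K hKc hKU using hch
  rw [isOpen_induced_iff]
  refine ⟨⋃ x : U, {f : C(Fan, Bool) | ∀ p ∈ K x, f p = eArens x.1 p}, ?_, ?_⟩
  · exact isOpen_iUnion fun x => isOpen_agree _ (hKc x)
  · ext y
    simp only [Set.mem_preimage, Set.mem_iUnion, Set.mem_setOf_eq]
    constructor
    · rintro ⟨x, hx⟩
      exact hKU x y hx
    · intro hy
      exact ⟨⟨y, hy⟩, fun p _ => rfl⟩

/-! ### The range of the embedding is closed -/

lemma cTop_mem_range : cTop ∈ Set.range eArens := ⟨pt0, e_zero rfl⟩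

lemma cS_mem_range {n : ℕ} (hn : 0 < n) : cS n ∈ Set.range eArens := ⟨ptS n hn, e_S hn rfl⟩

lemma cU_mem_range {n m : ℕ} (hn : 0 < n) (hm : 0 < m) : cU n m ∈ Set.range eArens :=
  ⟨ptU n m hn hm, e_U hn hm rfl⟩

lemma witness {g h : C(Fan, Bool)} (hne : g ≠ h) : ∃ q, g q ≠ h q := by
  by_contra hc
  push_neg at hc
  exact hne (ContinuousMap.ext hc)

lemma isClosed_range_e : IsClosed (Set.range eArens) := by
  rw [← isOpen_compl_iff, isOpen_iff_forall_mem_open]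
  intro g hg
  suffices hs : ∃ K : Set Fan, IsCompact K ∧
      (¬ ∀ p ∈ K, cTop p = g p) ∧
      (∀ n : ℕ, 0 < n → ¬ ∀ p ∈ K, cS n p = g p) ∧
      (∀ n m : ℕ, 0 < n → 0 < m → ¬ ∀ p ∈ K, cU n m p = g p) by
    obtain ⟨K, hKc, hT, hS, hUU⟩ := hs
    refine ⟨{f | ∀ p ∈ K, f p = g p}, ?_, isOpen_agree g hKc, fun p _ => rfl⟩
    intro f hf hfr
    obtain ⟨x, rfl⟩ := hfr
    rcases carrier_cases x with h0 | ⟨n, hn, h⟩ | ⟨n, m, hn, hm, h⟩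
    · exact hT (e_zero h0 ▸ hf)
    · exact hS n hn (e_S hn h ▸ hf)
    · exact hUU n m hn hm (e_U hn hm h ▸ hf)
  by_cases hinf : g none = true
  case neg =>
    exact ⟨{none}, (Set.finite_singleton _).isCompact,
      fun hag => hinf (hag none rfl).symm,
      fun n hn hag => hinf (hag none rfl).symm,
      fun n m hn hm hag => hinf (hag none rfl).symm⟩
  obtain ⟨N, hfan⟩ := mem_nhds_none ((isOpen_discrete _).preimage g.continuous)
    (by simpa using hinf : (none : Fan) ∈ g ⁻¹' {true})
  have hN : ∀ p : ℕ × ℕ, N ≤ p.1 → g (some p) = true :=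
    fun p hp => hfan (some_mem_fanU.mpr hp)
  by_cases h00 : g (some (0, 0)) = true
  case neg =>
    refine ⟨{some (0, 0)}, (Set.finite_singleton _).isCompact, ?_, ?_, ?_⟩
    · exact fun hag => h00 (hag _ rfl).symm
    · intro n hn hag
      apply h00
      rw [← hag _ rfl]
      simp
    · intro n m hn hm hag
      apply h00
      rw [← hag _ rfl]
      simp
  by_cases h01 : g (some (0, 1)) = true
  case neg =>
    refine ⟨{some (0, 1)}, (Set.finite_singleton _).isCompact, ?_, ?_, ?_⟩
    · exact fun hag => h01 (hag _ rfl).symm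
    · intro n hn hag
      apply h01
      rw [← hag _ rfl]
      simp
      omega
    · intro n m hn hm hag
      apply h01
      rw [← hag _ rfl]
      simp
      omega
  by_cases h0FT : ∃ j : ℕ, ¬ g (some (0, j)) = true ∧ g (some (0, j + 1)) = true
  case pos =>
    obtain ⟨j, hj1, hj2⟩ := h0FT
    have hj1' : g (some (0, j)) = false := Bool.not_eq_true _ ▸ hj1
    refine ⟨{some (0, j), some (0, j + 1)}, (Set.toFinite _).isCompact, ?_, ?_, ?_⟩
    · intro hag
      exact hj1 (hag (some (0, j)) (by simp)).symm
    · intro n hn hag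
      have h1 := hag (some (0, j)) (by simp)
      have h2 := hag (some (0, j + 1)) (by simp)
      rw [hj1'] at h1
      rw [hj2] at h2
      simp at h1 h2
      omega
    · intro n m hn hm hag
      have h1 := hag (some (0, j)) (by simp)
      have h2 := hag (some (0, j + 1)) (by simp)
      rw [hj1'] at h1
      rw [hj2] at h2
      simp at h1 h2
      omega
  have hdc0 : ∀ j : ℕ, ¬ g (some (0, j)) = true → ¬ g (some (0, j + 1)) = true :=
    fun j hj hc => h0FT ⟨j, hj, hc⟩
  by_cases h10 : g (some (1, 0)) = true
  case neg =>
    refine ⟨{some (1, 0)}, (Set.finite_singleton _).isCompact, ?_, ?_, ?_⟩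
    · exact fun hag => h10 (hag _ rfl).symm
    · intro n hn hag
      apply h10
      rw [← hag _ rfl]
      simp
    · intro n m hn hm hag
      apply h10
      rw [← hag _ rfl]
      simp
      omega
  by_cases h1FT : ∃ j : ℕ, ¬ g (some (1, j)) = true ∧ g (some (1, j + 1)) = true
  case pos =>
    obtain ⟨j, hj1, hj2⟩ := h1FT
    have hj1' : g (some (1, j)) = false := Bool.not_eq_true _ ▸ hj1
    refine ⟨{some (1, j), some (1, j + 1)}, (Set.toFinite _).isCompact, ?_, ?_, ?_⟩
    · intro hag
      exact hj1 (hag (some (1, j)) (by simp)).symm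
    · intro n hn hag
      apply hj1
      rw [← hag (some (1, j)) (by simp)]
      simp
    · intro n m hn hm hag
      have h1 := hag (some (1, j)) (by simp)
      have h2 := hag (some (1, j + 1)) (by simp)
      rw [hj1'] at h1
      rw [hj2] at h2
      simp at h1 h2
      omega
  have hdc1 : ∀ j : ℕ, ¬ g (some (1, j)) = true → ¬ g (some (1, j + 1)) = true :=
    fun j hj hc => h1FT ⟨j, hj, hc⟩
  by_cases h0A : ∀ j : ℕ, g (some (0, j)) = true
  · by_cases h1A : ∀ j : ℕ, g (some (1, j)) = true
    · -- both columns all true: compare with cTop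
      obtain ⟨p, hp⟩ := witness (fun he => hg (he ▸ cTop_mem_range) : g ≠ cTop)
      match p with
      | none => exact absurd hinf hp
      | some (0, j) => exact absurd (h0A j) hp
      | some (i+1, j) =>
        have hgij : g (some (i + 1, j)) = false := by
          cases hb : g (some (i + 1, j)) with
          | true => exact absurd hb hp
          | false => rfl
        refine ⟨{some (i + 1, j), some (1, j)}, (Set.toFinite _).isCompact, ?_, ?_, ?_⟩
        · intro hag
          exact hp (hag (some (i + 1, j)) (by simp)).symm
        · intro n hn hag
          have h1 := hag (some (i + 1, j)) (by simp)
          rw [hgij] at h1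
          simp at h1
        · intro n m hn hm hag
          have h1 := hag (some (i + 1, j)) (by simp)
          have h2 := hag (some (1, j)) (by simp)
          rw [hgij] at h1
          rw [h1A j] at h2
          simp at h1 h2
          omega
    · -- column 0 all true, column 1 has threshold m₀
      push_neg at h1A
      have hex1 : ∃ j : ℕ, ¬ g (some (1, j)) = true := by
        obtain ⟨j, hj⟩ := h1A; exact ⟨j, hj⟩
      set m₀ := Nat.find hex1 with hm₀def
      have hm₀spec : ¬ g (some (1, m₀)) = true := Nat.find_spec hex1
      have hm₀specF : g (some (1, m₀)) = false := Bool.not_eq_true _ ▸ hm₀spec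
      have hm₀min : ∀ j, j < m₀ → g (some (1, j)) = true :=
        fun j hj => of_not_not (Nat.find_min hex1 hj)
      have hm₀pos : 0 < m₀ := by
        rcases Nat.eq_zero_or_pos m₀ with h | h
        · exact absurd (h ▸ h10) hm₀spec
        · exact h
      have hwk : ∀ k : ℕ, ∃ q, 0 < k → g q ≠ cU k m₀ q := by
        intro k
        by_cases hk : 0 < k
        · obtain ⟨q, hq⟩ := witness
            (fun he => hg (he ▸ cU_mem_range hk hm₀pos) : g ≠ cU k m₀)
          exact ⟨q, fun _ => hq⟩
        · exact ⟨none, fun h => absurd h hk⟩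
      choose w hw using hwk
      set A : Set (ℕ × ℕ) := {(1, m₀ - 1)} ∪ {q : ℕ × ℕ | q.2 = m₀} with hA
      have hAfin : ∀ n', {p ∈ A | p.1 < n'}.Finite := by
        intro n'
        apply Set.Finite.subset (Set.Finite.union (Set.finite_singleton ((1, m₀ - 1) : ℕ × ℕ))
          ((Set.finite_Icc 0 n').image (fun i => (i, m₀))))
        rintro q ⟨hq1, hq2⟩
        rcases hq1 with rfl | hq1
        · exact Or.inl rfl
        · exact Or.inr ⟨q.1, by simp; omega, Prod.ext rfl hq1.symm⟩
      set S1 : Set Fan := {z : Fan | z = none ∨ ∃ p ∈ A, z = some p} with hS1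
      set W : Set Fan := ⋃ k ∈ Finset.range N, {w k} with hW
      have hWfin : W.Finite :=
        Set.Finite.biUnion (Finset.range N).finite_toSet (fun _ _ => Set.finite_singleton _)
      have hmem1 : (some (1, m₀ - 1) : Fan) ∈ S1 ∪ W :=
        Or.inl (Or.inr ⟨(1, m₀ - 1), Or.inl rfl, rfl⟩)
      have hmemrow : ∀ k : ℕ, (some (k, m₀) : Fan) ∈ S1 ∪ W :=
        fun k => Or.inl (Or.inr ⟨(k, m₀), Or.inr rfl, rfl⟩)
      refine ⟨S1 ∪ W, (isCompact_fan hAfin).union hWfin.isCompact, ?_, ?_, ?_⟩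
      · intro hag
        exact hm₀spec (hag (some (1, m₀)) (hmemrow 1)).symm
      · intro n hn hag
        apply hm₀spec
        rw [← hag (some (1, m₀)) (hmemrow 1)]
        simp
      · intro n m hn hm hag
        have h3 := hag (some (1, m₀ - 1)) hmem1
        have h4 := hag (some (1, m₀)) (hmemrow 1)
        rw [hm₀min (m₀ - 1) (by omega)] at h3
        rw [hm₀specF] at h4
        simp at h3 h4
        have hm2 : m = m₀ := by omega
        subst hm2
        by_cases hnN : N ≤ n
        · have h5 := hag (some (n, m₀)) (hmemrow n)
          rw [hN (n, m₀) hnN] at h5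
          simp [hn.ne'] at h5
        · have h6 := hag (w n) (Or.inr (Set.mem_biUnion
            (Finset.mem_range.mpr (by omega)) rfl))
          exact hw n hn h6.symm
  · -- column 0 has a threshold j₀
    push_neg at h0A
    have hex0 : ∃ j : ℕ, ¬ g (some (0, j)) = true := by
      obtain ⟨j, hj⟩ := h0A; exact ⟨j, hj⟩
    set j₀ := Nat.find hex0 with hj₀def
    have hj₀spec : ¬ g (some (0, j₀)) = true := Nat.find_spec hex0
    have hj₀specF : g (some (0, j₀)) = false := Bool.not_eq_true _ ▸ hj₀spec
    have hj₀min : ∀ j, j < j₀ → g (some (0, j)) = true :=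
      fun j hj => of_not_not (Nat.find_min hex0 hj)
    have hj₀2 : 2 ≤ j₀ := by
      by_contra hc
      push_neg at hc
      interval_cases j₀
      · exact hj₀spec h00
      · exact hj₀spec h01
    set n₀ := j₀ - 1 with hn₀def
    have hn₀1 : n₀ + 1 = j₀ := by omega
    have hn₀pos : 0 < n₀ := by omega
    have hgn₀ : g (some (0, n₀)) = true := hj₀min n₀ (by omega)
    have hg0F : ∀ j : ℕ, j₀ ≤ j → ¬ g (some (0, j)) = true := by
      intro j hj
      induction j, hj using Nat.le_induction with
      | base => exact hj₀spec
      | succ n hn ih => exact hdc0 n ih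
    by_cases h1A : ∀ j : ℕ, g (some (1, j)) = true
    · -- column 0 threshold, column 1 all true: compare with cS n₀
      obtain ⟨p, hp⟩ := witness
        (fun he => hg (he ▸ cS_mem_range hn₀pos) : g ≠ cS n₀)
      match p with
      | none => exact absurd hinf hp
      | some (0, j) =>
        exfalso
        apply hp
        show g (some (0, j)) = cS n₀ (some (0, j))
        simp only [cS_some]
        by_cases hj : j < n₀ + 1
        · rw [hj₀min j (by omega)]
          simp
          omega
        · have hgF : g (some (0, j)) = false := Bool.not_eq_true _ ▸ hg0F j (by omega)
          rw [hgF]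
          simp
          omega
      | some (i+1, j) =>
        have hgij : g (some (i + 1, j)) = false := by
          cases hb : g (some (i + 1, j)) with
          | true => exact absurd (by rw [hb]; simp : g (some (i + 1, j)) = cS n₀ (some (i + 1, j))) hp
          | false => rfl
        refine ⟨{some (0, n₀), some (0, n₀ + 1), some (i + 1, j), some (1, j)},
          (Set.toFinite _).isCompact, ?_, ?_, ?_⟩
        · intro hag
          have h2 := hag (some (0, n₀ + 1)) (by simp)
          rw [hn₀1] at h2
          exact hj₀spec h2.symm
        · intro n hn hag
          have h1 := hag (some (0, n₀)) (by simp)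
          have h2 := hag (some (0, n₀ + 1)) (by simp)
          have h3 := hag (some (i + 1, j)) (by simp)
          rw [hgn₀] at h1
          rw [hn₀1] at h2
          rw [hj₀specF] at h2
          rw [hgij] at h3
          simp at h1 h2 h3
        · intro n m hn hm hag
          have h1 := hag (some (0, n₀)) (by simp)
          have h2 := hag (some (0, n₀ + 1)) (by simp)
          have h3 := hag (some (i + 1, j)) (by simp)
          have h4 := hag (some (1, j)) (by simp)
          rw [hgn₀] at h1
          rw [hn₀1] at h2
          rw [hj₀specF] at h2
          rw [hgij] at h3
          rw [h1A j] at h4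
          simp at h1 h2 h3 h4
          omega
    · -- both thresholds: compare with cU n₀ m₀
      push_neg at h1A
      have hex1 : ∃ j : ℕ, ¬ g (some (1, j)) = true := by
        obtain ⟨j, hj⟩ := h1A; exact ⟨j, hj⟩
      set m₀ := Nat.find hex1 with hm₀def
      have hm₀spec : ¬ g (some (1, m₀)) = true := Nat.find_spec hex1
      have hm₀specF : g (some (1, m₀)) = false := Bool.not_eq_true _ ▸ hm₀spec
      have hm₀min : ∀ j, j < m₀ → g (some (1, j)) = true :=
        fun j hj => of_not_not (Nat.find_min hex1 hj)
      have hm₀pos : 0 < m₀ := by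
        rcases Nat.eq_zero_or_pos m₀ with h | h
        · exact absurd (h ▸ h10) hm₀spec
        · exact h
      obtain ⟨q, hq⟩ := witness
        (fun he => hg (he ▸ cU_mem_range hn₀pos hm₀pos) : g ≠ cU n₀ m₀)
      refine ⟨{q, some (0, n₀), some (0, n₀ + 1), some (1, m₀ - 1), some (1, m₀)},
        (Set.toFinite _).isCompact, ?_, ?_, ?_⟩
      · intro hag
        have h2 := hag (some (0, n₀ + 1)) (by simp)
        rw [hn₀1] at h2
        exact hj₀spec h2.symm
      · intro n hn hag
        have h4 := hag (some (1, m₀)) (by simp)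
        rw [hm₀specF] at h4
        simp at h4
      · intro n m hn hm hag
        have h1 := hag (some (0, n₀)) (by simp)
        have h2 := hag (some (0, n₀ + 1)) (by simp)
        have h3 := hag (some (1, m₀ - 1)) (by simp)
        have h4 := hag (some (1, m₀)) (by simp)
        rw [hgn₀] at h1
        rw [hn₀1] at h2
        rw [hj₀specF] at h2
        rw [hm₀min (m₀ - 1) (by omega)] at h3
        rw [hm₀specF] at h4
        simp at h1 h2 h3 h4
        have hnn : n = n₀ := by omega
        have hmm : m = m₀ := by omega
        subst hnn
        subst hmm
        exact hq (hag q (by simp)).symm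

theorem stmt2 :
    ∃ e : ArensS2 → C(Fan, Bool), Topology.IsClosedEmbedding e :=
  ⟨eArens, ⟨⟨inducing_e, injective_e⟩, isClosed_range_e⟩⟩
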